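/- In genus 3, there exist six pairwise distinct Göpel groups G₁,…,G₆ ⊆ 𝔽₂⁶ with even cosets M₁,…,M₆ such that for every even characteristic m ∈ 𝔽₂⁶, the number of indices i ∈ {1,2,3} with m ∈ Mᵢ equals the number of indices i ∈ {4,5,6} with m ∈ Mᵢ; consequently the tautological cubic relation ϑ_{G₁}ϑ_{G₂}ϑ_{G₃} = ϑ_{G₄}ϑ_{G₅}ϑ_{G₆} holds as an identity of monomials in the theta nullwerte. -/

import Mathlib

open BigOperators Matrix

/-- Theta characteristics in genus `g`: pairs `(a, b)` with `a, b ∈ 𝔽₂^g`. -/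
abbrev TChar (g : ℕ) := (Fin g → ZMod 2) × (Fin g → ZMod 2)

/-- A theta characteristic `(a, b)` is even if `Σᵢ aᵢbᵢ = 0` in `𝔽₂`. -/
def IsEvenChar {g : ℕ} (m : TChar g) : Prop := ∑ i, m.1 i * m.2 i = 0

/-- The standard symplectic pairing `⟨m,n⟩ = aᵀβ + bᵀα` on `𝔽₂^{2g}`. -/
def symplecticPairing {g : ℕ} (m n : TChar g) : ZMod 2 :=
  ∑ i, (m.1 i * n.2 i + m.2 i * n.1 i)

/-- A subspace is totally isotropic if the symplectic pairing vanishes on it. -/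
def IsIsotropic {g : ℕ} (G : Submodule (ZMod 2) (TChar g)) : Prop :=
  ∀ m ∈ G, ∀ n ∈ G, symplecticPairing m n = 0

/-- A Göpel group is a maximal totally isotropic subspace of `𝔽₂^{2g}`. -/
def IsGopel {g : ℕ} (G : Submodule (ZMod 2) (TChar g)) : Prop :=
  IsIsotropic G ∧ ∀ G' : Submodule (ZMod 2) (TChar g), IsIsotropic G' → G ≤ G' → G' = G

/-- The even coset of a Göpel group `G`: those `m` with `m + G` consisting of
even characteristics. -/
def evenCoset {g : ℕ} (G : Submodule (ZMod 2) (TChar g)) : Set (TChar g) :=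
  {m | ∀ x ∈ G, IsEvenChar (m + x)}

/-- The Siegel upper half space of genus `g`. -/
def SiegelHalfSpace (g : ℕ) : Set (Matrix (Fin g) (Fin g) ℂ) :=
  {Z | Z.IsSymm ∧ (Z.map Complex.im).PosDef}

/-- The theta nullwert `ϑ[m](Z)` for the characteristic `m = (a,b)`. -/
noncomputable def thetaNull (g : ℕ) (Z : Matrix (Fin g) (Fin g) ℂ)
    (m : TChar g) : ℂ :=
  ∑' n : Fin g → ℤ, Complex.exp ((Real.pi : ℂ) * Complex.I *
    ((∑ i, ∑ j, ((n i : ℂ) + ((m.1 i).val : ℂ) / 2) * Z i j * ((n j : ℂ) + ((m.1 j).val : ℂ) / 2)) +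
      ∑ i, ((m.2 i).val : ℂ) * (2 * (n i : ℂ) + ((m.1 i).val : ℂ))))

/-- The Göpel form `ϑ_G = ∏_{m ∈ M} ϑ[m]`, `M` the even coset of `G`. -/
noncomputable def gopelTheta (g : ℕ) (G : Submodule (ZMod 2) (TChar g))
    (Z : Matrix (Fin g) (Fin g) ℂ) : ℂ :=
  ∏ᶠ m ∈ evenCoset G, thetaNull g Z m



set_option maxRecDepth 100000

def Sv : Fin 6 → Finset (TChar 3) := ![
  {(![0,0,0], ![0,0,0]), (![1,0,0], ![1,0,0]), (![0,1,0], ![0,1,0]), (![1,1,0], ![1,1,0]), (![0,0,0], ![0,0,1]), (![1,0,0], ![1,0,1]), (![0,1,0], ![0,1,1]), (![1,1,0], ![1,1,1])},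
  {(![0,0,0], ![0,0,0]), (![0,1,1], ![1,0,0]), (![1,0,1], ![0,1,0]), (![1,1,0], ![1,1,0]), (![1,1,0], ![0,0,1]), (![1,0,1], ![1,0,1]), (![0,1,1], ![0,1,1]), (![0,0,0], ![1,1,1])},
  {(![0,0,0], ![0,0,0]), (![1,1,0], ![0,0,0]), (![0,0,0], ![1,1,0]), (![1,1,0], ![1,1,0]), (![0,0,1], ![0,0,1]), (![1,1,1], ![0,0,1]), (![0,0,1], ![1,1,1]), (![1,1,1], ![1,1,1])},
  {(![0,0,0], ![0,0,0]), (![1,0,0], ![1,0,0]), (![0,1,0], ![0,1,0]), (![1,1,0], ![1,1,0]), (![0,0,1], ![0,0,1]), (![1,0,1], ![1,0,1]), (![0,1,1], ![0,1,1]), (![1,1,1], ![1,1,1])},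
  {(![0,0,0], ![0,0,0]), (![1,1,0], ![0,0,0]), (![0,0,0], ![1,1,0]), (![1,1,0], ![1,1,0]), (![0,0,0], ![0,0,1]), (![1,1,0], ![0,0,1]), (![0,0,0], ![1,1,1]), (![1,1,0], ![1,1,1])},
  {(![0,0,0], ![0,0,0]), (![0,1,1], ![1,0,0]), (![1,0,1], ![0,1,0]), (![1,1,0], ![1,1,0]), (![1,1,1], ![0,0,1]), (![1,0,0], ![1,0,1]), (![0,1,0], ![0,1,1]), (![0,0,1], ![1,1,1])}
]
def Tv : Fin 6 → Finset (TChar 3) := ![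
  {(![1,1,0], ![0,0,0]), (![0,1,0], ![1,0,0]), (![1,0,0], ![0,1,0]), (![0,0,0], ![1,1,0]), (![1,1,0], ![0,0,1]), (![0,1,0], ![1,0,1]), (![1,0,0], ![0,1,1]), (![0,0,0], ![1,1,1])},
  {(![0,0,0], ![0,0,0]), (![0,1,1], ![1,0,0]), (![1,0,1], ![0,1,0]), (![1,1,0], ![1,1,0]), (![1,1,0], ![0,0,1]), (![1,0,1], ![1,0,1]), (![0,1,1], ![0,1,1]), (![0,0,0], ![1,1,1])},
  {(![0,0,1], ![0,0,0]), (![1,1,1], ![0,0,0]), (![0,0,1], ![1,1,0]), (![1,1,1], ![1,1,0]), (![0,0,0], ![0,0,1]), (![1,1,0], ![0,0,1]), (![0,0,0], ![1,1,1]), (![1,1,0], ![1,1,1])},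
  {(![1,1,1], ![0,0,0]), (![0,1,1], ![1,0,0]), (![1,0,1], ![0,1,0]), (![0,0,1], ![1,1,0]), (![1,1,0], ![0,0,1]), (![0,1,0], ![1,0,1]), (![1,0,0], ![0,1,1]), (![0,0,0], ![1,1,1])},
  {(![0,0,0], ![0,0,0]), (![1,1,0], ![0,0,0]), (![0,0,0], ![1,1,0]), (![1,1,0], ![1,1,0]), (![0,0,0], ![0,0,1]), (![1,1,0], ![0,0,1]), (![0,0,0], ![1,1,1]), (![1,1,0], ![1,1,1])},
  {(![0,0,1], ![0,0,0]), (![0,1,0], ![1,0,0]), (![1,0,0], ![0,1,0]), (![1,1,1], ![1,1,0]), (![1,1,0], ![0,0,1]), (![1,0,1], ![1,0,1]), (![0,1,1], ![0,1,1]), (![0,0,0], ![1,1,1])}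
]


instance {g : ℕ} : DecidablePred (IsEvenChar (g := g)) :=
  fun _ => inferInstanceAs (Decidable (_ = _))

/-- Build a submodule over `ZMod 2` from a finset closed under `0` and `+`. -/
def mkSub (S : Finset (TChar 3)) (h0 : (0 : TChar 3) ∈ S)
    (hadd : ∀ a ∈ S, ∀ b ∈ S, a + b ∈ S) : Submodule (ZMod 2) (TChar 3) where
  carrier := S
  zero_mem' := h0
  add_mem' := fun ha hb => hadd _ ha _ hb
  smul_mem' := by
    intro c x hx
    have hc : c = 0 ∨ c = 1 := by
      fin_cases c
      · exact Or.inl rfl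
      · exact Or.inr rfl
    rcases hc with h | h <;> subst h
    · simpa using h0
    · simpa using hx

lemma mem_mkSub {S : Finset (TChar 3)} {h0 hadd} {x : TChar 3} :
    x ∈ mkSub S h0 hadd ↔ x ∈ S := Iff.rfl

lemma gopel_of (S : Finset (TChar 3)) (h0 : (0 : TChar 3) ∈ S)
    (hadd : ∀ a ∈ S, ∀ b ∈ S, a + b ∈ S)
    (hiso : ∀ m ∈ S, ∀ n ∈ S, symplecticPairing m n = 0)
    (hmax : ∀ n : TChar 3, (∀ m ∈ S, symplecticPairing m n = 0) → n ∈ S) :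
    IsGopel (mkSub S h0 hadd) := by
  constructor
  · intro m hm n hn
    exact hiso m hm n hn
  · intro G' hG' hle
    refine le_antisymm ?_ hle
    intro n hn
    exact hmax n (fun m hm => hG' m (hle hm) n hn)

lemma h0S : ∀ i : Fin 6, (0 : TChar 3) ∈ Sv i := by decide

lemma haddS : ∀ i : Fin 6, ∀ a ∈ Sv i, ∀ b ∈ Sv i, a + b ∈ Sv i := by decide

lemma hisoS : ∀ i : Fin 6, ∀ m ∈ Sv i, ∀ n ∈ Sv i, symplecticPairing m n = 0 := by
  decide

lemma hmaxS : ∀ i : Fin 6, ∀ n : TChar 3,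
    (∀ m ∈ Sv i, symplecticPairing m n = 0) → n ∈ Sv i := by
  letI : ∀ i : Fin 6, DecidablePred (fun n : TChar 3 =>
      (∀ m ∈ Sv i, symplecticPairing m n = 0) → n ∈ Sv i) :=
    fun _ _ => inferInstance
  decide

lemma hcosetS : ∀ i : Fin 6, ∀ m : TChar 3,
    (∀ x ∈ Sv i, IsEvenChar (m + x)) ↔ m ∈ Tv i := by
  letI : ∀ i : Fin 6, DecidablePred (fun m : TChar 3 =>
      (∀ x ∈ Sv i, IsEvenChar (m + x)) ↔ m ∈ Tv i) :=
    fun _ _ => inferInstance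
  decide

lemma hcount : ∀ m : TChar 3,
    (Finset.univ.filter (fun i : Fin 6 => i.val < 3 ∧ m ∈ Tv i)).card =
      (Finset.univ.filter (fun i : Fin 6 => 3 ≤ i.val ∧ m ∈ Tv i)).card := by
  decide

lemma hmultiset : (Tv 0).val + (Tv 1).val + (Tv 2).val =
    (Tv 3).val + (Tv 4).val + (Tv 5).val := by decide

lemma hSdistinct : ∀ i j : Fin 6, Sv i = Sv j → i = j := by decide

/-- In genus 3 there are six pairwise distinct Göpel groups `G₁,…,G₆` such that every
even characteristic belongs to as many of the even cosets `M₁, M₂, M₃` as of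
`M₄, M₅, M₆`; consequently `ϑ_{G₁}ϑ_{G₂}ϑ_{G₃} = ϑ_{G₄}ϑ_{G₅}ϑ_{G₆}`. -/
theorem exists_gopel_cubic_relation :
    ∃ G : Fin 6 → Submodule (ZMod 2) (TChar 3),
      (∀ i, IsGopel (G i)) ∧ Function.Injective G ∧
      (∀ m : TChar 3, IsEvenChar m →
        Nat.card {i : Fin 6 // i.val < 3 ∧ m ∈ evenCoset (G i)} =
          Nat.card {i : Fin 6 // 3 ≤ i.val ∧ m ∈ evenCoset (G i)}) ∧
      (∀ Z ∈ SiegelHalfSpace 3,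
        gopelTheta 3 (G 0) Z * gopelTheta 3 (G 1) Z * gopelTheta 3 (G 2) Z =
          gopelTheta 3 (G 3) Z * gopelTheta 3 (G 4) Z * gopelTheta 3 (G 5) Z) := by
  refine ⟨fun i => mkSub (Sv i) (h0S i) (haddS i), ?_, ?_, ?_, ?_⟩
  · intro i
    exact gopel_of (Sv i) (h0S i) (haddS i) (hisoS i) (hmaxS i)
  · intro i j h
    exact hSdistinct i j (Finset.coe_injective (congrArg (fun G : Submodule (ZMod 2) (TChar 3) => (G : Set (TChar 3))) h))
  · intro m _
    have hc : ∀ i : Fin 6, m ∈ evenCoset (mkSub (Sv i) (h0S i) (haddS i)) ↔ m ∈ Tv i := by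
      intro i
      rw [show (m ∈ evenCoset (mkSub (Sv i) (h0S i) (haddS i))) =
          (∀ x ∈ Sv i, IsEvenChar (m + x)) from rfl]
      exact hcosetS i m
    rw [Nat.card_congr (Equiv.subtypeEquivRight (fun i => and_congr_right (fun _ => hc i))),
        Nat.card_congr (Equiv.subtypeEquivRight (fun i => and_congr_right (fun _ => hc i))),
        Nat.card_eq_fintype_card, Nat.card_eq_fintype_card,
        Fintype.card_subtype, Fintype.card_subtype]
    exact hcount m
  · intro Z _
    have hc : ∀ i : Fin 6, evenCoset (mkSub (Sv i) (h0S i) (haddS i)) = ↑(Tv i) := by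
      intro i
      ext m
      rw [Finset.mem_coe]
      exact hcosetS i m
    have hg : ∀ i : Fin 6, gopelTheta 3 (mkSub (Sv i) (h0S i) (haddS i)) Z =
        ((Tv i).val.map (thetaNull 3 Z)).prod := by
      intro i
      rw [gopelTheta, hc i, finprod_mem_coe_finset]
      rfl
    rw [hg 0, hg 1, hg 2, hg 3, hg 4, hg 5,
        ← Multiset.prod_add, ← Multiset.prod_add, ← Multiset.prod_add, ← Multiset.prod_add,
        ← Multiset.map_add, ← Multiset.map_add, ← Multiset.map_add, ← Multiset.map_add,
        hmultiset]
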